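/- arXiv:1912.12415 — 2 statements merged into one kernel-verified Lean document; each statement's English description precedes it below -/
import Mathlib

section
/- Let G be a group such that x ⊗ x = 1_⊗ for all x ∈ G. Then every tensor central automorphism of G is a tensor commuting automorphism of G; that is, Aut_c^⊗(G) ⊆ A^⊗(G). -/
/-!
Non-abelian tensor square `G ⊗ G`, constructed as the presented group on
symbols `g ⊗ h` with the defining relations
`g*g' ⊗ h = (g^{g'} ⊗ h^{g'}) * (g' ⊗ h)` and
`g ⊗ h*h' = (g ⊗ h') * (g^{h'} ⊗ h^{h'})`, where `a ^ b = b⁻¹ * a * b`.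
-/

variable {G : Type*} [Group G]

/-- Defining relations of the non-abelian tensor square `G ⊗ G`. -/
def tensorRels (G : Type*) [Group G] : Set (FreeGroup (G × G)) :=
  {r | (∃ g g' h : G,
      r = FreeGroup.of (g * g', h) *
        (FreeGroup.of (g'⁻¹ * g * g', g'⁻¹ * h * g') * FreeGroup.of (g', h))⁻¹) ∨
    (∃ g h h' : G,
      r = FreeGroup.of (g, h * h') *
        (FreeGroup.of (g, h') * FreeGroup.of (h'⁻¹ * g * h', h'⁻¹ * h * h'))⁻¹)}

/-- The non-abelian tensor square `G ⊗ G`. -/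
abbrev TensorSquare (G : Type*) [Group G] := PresentedGroup (tensorRels G)

/-- The tensor `g ⊗ h` as an element of `G ⊗ G`. -/
def tmul (g h : G) : TensorSquare G := PresentedGroup.of (g, h)

theorem tensorRels_eq_one {r : FreeGroup (G × G)} (hr : r ∈ tensorRels G) :
    PresentedGroup.mk (tensorRels G) r = 1 :=
  (QuotientGroup.eq_one_iff r).mpr (Subgroup.subset_normalClosure hr)

/-- The first defining relation of `G ⊗ G`. -/
theorem tmul_rel₁ (g g' h : G) :
    tmul (g * g') h = tmul (g'⁻¹ * g * g') (g'⁻¹ * h * g') * tmul g' h := by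
  have h1 := tensorRels_eq_one (G := G) (Or.inl ⟨g, g', h, rfl⟩)
  rw [map_mul, map_inv, map_mul, mul_inv_eq_one] at h1
  exact h1

/-- The second defining relation of `G ⊗ G`. -/
theorem tmul_rel₂ (g h h' : G) :
    tmul g (h * h') = tmul g h' * tmul (h'⁻¹ * g * h') (h'⁻¹ * h * h') := by
  have h1 := tensorRels_eq_one (G := G) (Or.inr ⟨g, h, h', rfl⟩)
  rw [map_mul, map_inv, map_mul, mul_inv_eq_one] at h1
  exact h1

/-- The action of `x : G` on `G ⊗ G`, determined by `(g ⊗ h) ^ x = (x⁻¹*g*x) ⊗ (x⁻¹*h*x)`. -/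
def tensorAct (x : G) : TensorSquare G →* TensorSquare G :=
  PresentedGroup.toGroup
    (f := fun p : G × G => tmul (x⁻¹ * p.1 * x) (x⁻¹ * p.2 * x))
    (by
      rintro r (⟨g, g', h, rfl⟩ | ⟨g, h, h', rfl⟩) <;>
        simp only [map_mul, map_inv, FreeGroup.lift_apply_of, mul_inv_eq_one]
      · have := tmul_rel₁ (x⁻¹ * g * x) (x⁻¹ * g' * x) (x⁻¹ * h * x)
        convert this using 2 <;> group
      · have := tmul_rel₂ (x⁻¹ * g * x) (x⁻¹ * h * x) (x⁻¹ * h' * x)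
        convert this using 2 <;> group)

@[simp] theorem tensorAct_tmul (x g h : G) :
    tensorAct x (tmul g h) = tmul (x⁻¹ * g * x) (x⁻¹ * h * x) :=
  PresentedGroup.toGroup.of _

/-- An automorphism `α` of `G` is tensor commuting if `g ⊗ α g = 1` for all `g`. -/
def IsTensorCommuting (α : G ≃* G) : Prop := ∀ g : G, tmul g (α g) = 1

/-- An automorphism `α` of `G` is tensor central if `[x, α] = x⁻¹ * α x` lies in the
tensor center of `G`, i.e. `(x⁻¹ * α x) ⊗ y = 1` for all `x y`. -/
def IsTensorCentral (α : G ≃* G) : Prop := ∀ x y : G, tmul (x⁻¹ * α x) y = 1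

/-- The inner automorphism `T_g : x ↦ x ^ g = g⁻¹ * x * g` of `G` induced by `g`. -/
def innerAut (g : G) : G ≃* G := MulAut.conj g⁻¹

/-- The "swap" homomorphism `σ : G ⊗ G → G ⊗ G`, `g ⊗ h ↦ (h ⊗ g)⁻¹`. -/
def tensorSwap : TensorSquare G →* TensorSquare G :=
  PresentedGroup.toGroup
    (f := fun p : G × G => (tmul p.2 p.1)⁻¹)
    (by
      rintro r (⟨g, g', h, rfl⟩ | ⟨g, h, h', rfl⟩) <;>
        simp only [map_mul, map_inv, FreeGroup.lift_apply_of, mul_inv_rev, inv_inv]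
      · rw [tmul_rel₂ h g g']
        group
      · rw [tmul_rel₁ h h' g]
        group)

@[simp] theorem tensorSwap_tmul (g h : G) :
    tensorSwap (tmul g h) = (tmul h g)⁻¹ :=
  PresentedGroup.toGroup.of _

/-- If `x ⊗ x = 1` for all `x ∈ G`, then every tensor central automorphism of `G` is a
tensor commuting automorphism. -/
theorem stmt_11 (G : Type*) [Group G] (hsq : ∀ x : G, tmul x x = 1)
    (α : G ≃* G) (hα : IsTensorCentral α) : IsTensorCommuting α := by
  intro g
  set c : G := g⁻¹ * α g with hc
  have h2 : tmul g c = 1 := by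
    have := congrArg tensorSwap (hα g g)
    rw [tensorSwap_tmul, map_one, inv_eq_one] at this
    exact this
  have hαg : α g = g * c := by rw [hc]; group
  rw [hαg, tmul_rel₂ g g c, h2, hsq, one_mul]
end

section
/- Let G be a group such that x ⊗ x = 1_⊗ for all x ∈ G. Then the derived subgroup of R_2^⊗(G) is contained in Z_2^⊗(G); in particular, for all g, h ∈ R_2^⊗(G), the commutator [g, h] = g⁻¹h⁻¹gh lies in Z_2^⊗(G). -/
/-!
Non-abelian tensor square `G ⊗ G`, constructed as the presented group on
symbols `g ⊗ h` with the defining relations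
`g*g' ⊗ h = (g^{g'} ⊗ h^{g'}) * (g' ⊗ h)` and
`g ⊗ h*h' = (g ⊗ h') * (g^{h'} ⊗ h^{h'})`, where `a ^ b = b⁻¹ * a * b`.
-/

variable {G : Type*} [Group G]

section Infra

variable {G : Type*} [Group G]

theorem tmul_congr {g₁ g₂ h₁ h₂ : G} (hg : g₁ = g₂) (hh : h₁ = h₂) :
    tmul g₁ h₁ = tmul g₂ h₂ := by rw [hg, hh]

theorem ts_hom_ext {H : Type*} [Group H] {f₁ f₂ : TensorSquare G →* H}
    (h : ∀ g h', f₁ (tmul g h') = f₂ (tmul g h')) : f₁ = f₂ :=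
  PresentedGroup.ext fun x => h x.1 x.2

theorem act_act (x y : G) (t : TensorSquare G) :
    tensorAct x (tensorAct y t) = tensorAct (y * x) t := by
  have : (tensorAct x).comp (tensorAct y) = tensorAct (G := G) (y * x) := by
    apply ts_hom_ext
    intro g h'
    simp only [MonoidHom.comp_apply, tensorAct_tmul]
    exact tmul_congr (by group) (by group)
  exact DFunLike.congr_fun this t

theorem act_one (t : TensorSquare G) : tensorAct (1 : G) t = t := by
  have : tensorAct (G := G) 1 = MonoidHom.id _ := by
    apply ts_hom_ext
    intro g h'
    simp only [tensorAct_tmul, MonoidHom.id_apply]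
    exact tmul_congr (by group) (by group)
  rw [this]; rfl

theorem act_cancel (x : G) (t : TensorSquare G) : tensorAct x⁻¹ (tensorAct x t) = t := by
  rw [act_act, mul_inv_cancel, act_one]

theorem act_eq_one {x : G} {t : TensorSquare G} (h : tensorAct x t = 1) : t = 1 := by
  have := congrArg (tensorAct x⁻¹) h
  rwa [act_cancel, map_one] at this

@[simp] theorem tmul_one_left (h : G) : tmul 1 h = 1 := by
  have := tmul_rel₁ (G := G) 1 1 h
  simp only [mul_one, inv_one, one_mul] at this
  exact (mul_eq_left (a := tmul (1:G) h)).mp this.symm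

@[simp] theorem tmul_one_right (g : G) : tmul g 1 = 1 := by
  have := tmul_rel₂ (G := G) g 1 1
  simp only [mul_one, inv_one, one_mul] at this
  exact (left_eq_mul.mp this)

/-- rel₁ in action form -/
theorem tmul_mul_left (g g' h : G) :
    tmul (g * g') h = tensorAct g' (tmul g h) * tmul g' h := by
  rw [tensorAct_tmul]; exact tmul_rel₁ g g' h

/-- rel₂ in action form -/
theorem tmul_mul_right (g h h' : G) :
    tmul g (h * h') = tmul g h' * tensorAct h' (tmul g h) := by
  rw [tensorAct_tmul]; exact tmul_rel₂ g h h'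

theorem tmul_inv_left (g h : G) :
    tmul g⁻¹ h = (tensorAct g⁻¹ (tmul g h))⁻¹ := by
  have := tmul_mul_left g g⁻¹ h
  rw [mul_inv_cancel] at this
  rw [tmul_one_left] at this
  exact eq_inv_of_mul_eq_one_right this.symm

theorem tmul_inv_right (g h : G) :
    tmul g h⁻¹ = (tensorAct h⁻¹ (tmul g h))⁻¹ := by
  have := tmul_mul_right g h h⁻¹
  rw [mul_inv_cancel, tmul_one_right] at this
  exact eq_inv_of_mul_eq_one_left this.symm

end Infra
section Infra2

variable {G : Type*} [Group G]

theorem key_exchange (g' h' g h : G) :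
    tmul g' h' * tmul ((g'*h')⁻¹*g*(g'*h')) ((g'*h')⁻¹*h*(g'*h')) =
    tmul ((h'*g')⁻¹*g*(h'*g')) ((h'*g')⁻¹*h*(h'*g')) * tmul g' h' := by
  have w1 : tmul (g*g') (h*h') =
      tmul (g'⁻¹*g*g') (g'⁻¹*h'*g') * (tmul g' h' *
      (tmul ((g'*h')⁻¹*g*(g'*h')) ((g'*h')⁻¹*h*(g'*h')) * tmul (h'⁻¹*g'*h') (h'⁻¹*h*h'))) := by
    calc tmul (g*g') (h*h')
        = tmul (g*g') h' * tmul (h'⁻¹*(g*g')*h') (h'⁻¹*h*h') := tmul_rel₂ _ _ _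
      _ = tmul (g*g') h' * tmul ((h'⁻¹*g*h')*(h'⁻¹*g'*h')) (h'⁻¹*h*h') := by
            rw [tmul_congr (g₁ := h'⁻¹*(g*g')*h') (by group : h'⁻¹*(g*g')*h' = (h'⁻¹*g*h')*(h'⁻¹*g'*h')) rfl]
      _ = tmul (g*g') h' *
          (tmul ((h'⁻¹*g'*h')⁻¹*(h'⁻¹*g*h')*(h'⁻¹*g'*h')) ((h'⁻¹*g'*h')⁻¹*(h'⁻¹*h*h')*(h'⁻¹*g'*h')) *
           tmul (h'⁻¹*g'*h') (h'⁻¹*h*h')) := by rw [← tmul_rel₁]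
      _ = (tmul (g'⁻¹*g*g') (g'⁻¹*h'*g') * tmul g' h') *
          (tmul ((g'*h')⁻¹*g*(g'*h')) ((g'*h')⁻¹*h*(g'*h')) * tmul (h'⁻¹*g'*h') (h'⁻¹*h*h')) := by
            rw [tmul_rel₁ g g' h',
              tmul_congr (g₁ := (h'⁻¹*g'*h')⁻¹*(h'⁻¹*g*h')*(h'⁻¹*g'*h'))
                (by group : (h'⁻¹*g'*h')⁻¹*(h'⁻¹*g*h')*(h'⁻¹*g'*h') = (g'*h')⁻¹*g*(g'*h'))
                (by group : (h'⁻¹*g'*h')⁻¹*(h'⁻¹*h*h')*(h'⁻¹*g'*h') = (g'*h')⁻¹*h*(g'*h'))]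
      _ = _ := by rw [mul_assoc]
  have w2 : tmul (g*g') (h*h') =
      tmul (g'⁻¹*g*g') (g'⁻¹*h'*g') * (tmul ((h'*g')⁻¹*g*(h'*g')) ((h'*g')⁻¹*h*(h'*g')) *
      (tmul g' h' * tmul (h'⁻¹*g'*h') (h'⁻¹*h*h'))) := by
    calc tmul (g*g') (h*h')
        = tmul (g'⁻¹*g*g') (g'⁻¹*(h*h')*g') * tmul g' (h*h') := tmul_rel₁ _ _ _
      _ = tmul (g'⁻¹*g*g') ((g'⁻¹*h*g')*(g'⁻¹*h'*g')) * tmul g' (h*h') := by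
            rw [tmul_congr rfl (by group : g'⁻¹*(h*h')*g' = (g'⁻¹*h*g')*(g'⁻¹*h'*g'))]
      _ = (tmul (g'⁻¹*g*g') (g'⁻¹*h'*g') *
           tmul ((g'⁻¹*h'*g')⁻¹*(g'⁻¹*g*g')*(g'⁻¹*h'*g')) ((g'⁻¹*h'*g')⁻¹*(g'⁻¹*h*g')*(g'⁻¹*h'*g'))) *
          tmul g' (h*h') := by rw [← tmul_rel₂]
      _ = (tmul (g'⁻¹*g*g') (g'⁻¹*h'*g') *
           tmul ((h'*g')⁻¹*g*(h'*g')) ((h'*g')⁻¹*h*(h'*g'))) *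
          (tmul g' h' * tmul (h'⁻¹*g'*h') (h'⁻¹*h*h')) := by
            rw [tmul_rel₂ g' h h',
              tmul_congr (g₁ := (g'⁻¹*h'*g')⁻¹*(g'⁻¹*g*g')*(g'⁻¹*h'*g'))
                (by group : (g'⁻¹*h'*g')⁻¹*(g'⁻¹*g*g')*(g'⁻¹*h'*g') = (h'*g')⁻¹*g*(h'*g'))
                (by group : (g'⁻¹*h'*g')⁻¹*(g'⁻¹*h*g')*(g'⁻¹*h'*g') = (h'*g')⁻¹*h*(h'*g'))]
      _ = _ := by rw [mul_assoc]
  have h12 := w1.symm.trans w2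
  have h3 := mul_left_cancel h12
  exact mul_right_cancel (((mul_assoc _ _ _).trans h3).trans (mul_assoc _ _ _).symm)

theorem key_conj (g h u v : G) :
    tmul g h * tmul ((g⁻¹*h⁻¹*g*h)⁻¹*u*(g⁻¹*h⁻¹*g*h)) ((g⁻¹*h⁻¹*g*h)⁻¹*v*(g⁻¹*h⁻¹*g*h)) =
    tmul u v * tmul g h := by
  have key := key_exchange g h ((h*g)*u*(h*g)⁻¹) ((h*g)*v*(h*g)⁻¹)
  have e1 : tmul ((g*h)⁻¹*((h*g)*u*(h*g)⁻¹)*(g*h)) ((g*h)⁻¹*((h*g)*v*(h*g)⁻¹)*(g*h)) =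
      tmul ((g⁻¹*h⁻¹*g*h)⁻¹*u*(g⁻¹*h⁻¹*g*h)) ((g⁻¹*h⁻¹*g*h)⁻¹*v*(g⁻¹*h⁻¹*g*h)) :=
    tmul_congr (by group) (by group)
  have e2 : tmul ((h*g)⁻¹*((h*g)*u*(h*g)⁻¹)*(h*g)) ((h*g)⁻¹*((h*g)*v*(h*g)⁻¹)*(h*g)) =
      tmul u v := tmul_congr (by group) (by group)
  rw [e1, e2] at key
  exact key

/-- T6: action by a commutator is conjugation by the corresponding tensor. -/
theorem act_commutator (g h : G) (t : TensorSquare G) :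
    tensorAct (g⁻¹*h⁻¹*g*h) t = (tmul g h)⁻¹ * t * tmul g h := by
  have : tensorAct (G := G) (g⁻¹*h⁻¹*g*h) = (MulAut.conj (tmul g h)⁻¹).toMonoidHom := by
    apply ts_hom_ext
    intro u v
    simp only [tensorAct_tmul, MulEquiv.coe_toMonoidHom, MulAut.conj_apply, inv_inv]
    refine mul_left_cancel (a := tmul g h) ?_
    rw [key_conj g h u v]
    simp [mul_assoc]
  rw [this]
  simp [MulAut.conj_apply, mul_assoc]

end Infra2
section Infra3

variable {G : Type*} [Group G]

theorem central_inv {g : G} (hz : ∀ w, g * w = w * g) : ∀ w, g⁻¹ * w = w * g⁻¹ := by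
  intro w
  calc g⁻¹*w = g⁻¹*(w*g)*g⁻¹ := by group
    _ = g⁻¹*(g*w)*g⁻¹ := by rw [← hz w]
    _ = w*g⁻¹ := by group

theorem act_of_central {z : G} (hz : ∀ w, z * w = w * z) (t : TensorSquare G) :
    tensorAct z t = t := by
  have : tensorAct (G := G) z = MonoidHom.id _ := by
    apply ts_hom_ext
    intro g h'
    simp only [tensorAct_tmul, MonoidHom.id_apply]
    exact tmul_congr (by rw [mul_assoc, ← hz g]; group) (by rw [mul_assoc, ← hz h']; group)
  rw [this]; rfl

/-- every element of the tensor square commutes with `tmul g h`, conjugation being the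
action of the commutator `[g,h]`. -/
theorem mul_tmul_eq (g h : G) (t : TensorSquare G) :
    t * tmul g h = tmul g h * tensorAct (g⁻¹*h⁻¹*g*h) t := by
  rw [act_commutator]
  simp [mul_assoc]

/-- C0 : if `g` and `h` commute, `tmul g h` is central in the tensor square. -/
theorem tmul_central_of_commute {g h : G} (hc : g * h = h * g) (t : TensorSquare G) :
    t * tmul g h = tmul g h * t := by
  rw [mul_tmul_eq]
  congr 1
  have e : g⁻¹*h⁻¹*g*h = 1 := by
    have e0 : g⁻¹*h⁻¹*g*h = g⁻¹*h⁻¹*(g*h) := by group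
    rw [e0, hc]; group
  rw [e, act_one]

/-- generalized C0: if the commutator `[g,h]` is central in `G`, then `tmul g h` is
central in the tensor square. -/
theorem tmul_central_of_central {g h : G} (hc : ∀ w, (g⁻¹*h⁻¹*g*h) * w = w * (g⁻¹*h⁻¹*g*h))
    (t : TensorSquare G) : t * tmul g h = tmul g h * t := by
  rw [mul_tmul_eq, act_of_central hc]

theorem tmul_inv_left_central {g : G} (hz : ∀ w, g * w = w * g) (h : G) :
    tmul g⁻¹ h = (tmul g h)⁻¹ := by
  rw [tmul_inv_left, act_of_central (central_inv hz)]

theorem tmul_inv_right_central {h : G} (hz : ∀ w, h * w = w * h) (g : G) :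
    tmul g h⁻¹ = (tmul g h)⁻¹ := by
  rw [tmul_inv_right, act_of_central (central_inv hz)]

/-- T7 : in presence of `x ⊗ x = 1`, tensors are antisymmetric. -/
theorem tmul_mul_swap (hsq : ∀ x : G, tmul x x = 1) (g h : G) :
    tmul g h * tmul h g = 1 := by
  apply act_eq_one (x := h)
  rw [map_mul]
  have e1 : tmul (g*h) h = tensorAct h (tmul g h) := by
    rw [tmul_mul_left g h h, hsq h, mul_one]
  have e2 : tmul (g*h) g = tmul h g := by
    rw [tmul_mul_left g h g, hsq g, map_one, one_mul]
  have e3 : tmul (g*h) (g*h) = tmul (g*h) h * tensorAct h (tmul (g*h) g) :=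
    tmul_mul_right _ _ _
  rw [e1, e2] at e3
  rw [← e3, hsq]

theorem tmul_swap (hsq : ∀ x : G, tmul x x = 1) (g h : G) :
    tmul h g = (tmul g h)⁻¹ :=
  eq_inv_of_mul_eq_one_right (by rw [← tmul_mul_swap hsq g h])

end Infra3
section Infra4

variable {G : Type*} [Group G]

/-- the commutator homomorphism `λ : G ⊗ G → G`. -/
def lamHom (G : Type*) [Group G] : TensorSquare G →* G :=
  PresentedGroup.toGroup (f := fun p : G × G => p.1⁻¹ * p.2⁻¹ * p.1 * p.2)
    (by
      rintro r (⟨g, g', h, rfl⟩ | ⟨g, h, h', rfl⟩) <;>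
        simp only [map_mul, map_inv, FreeGroup.lift_apply_of, mul_inv_eq_one] <;> group)

@[simp] theorem lamHom_tmul (g h : G) : lamHom G (tmul g h) = g⁻¹ * h⁻¹ * g * h :=
  PresentedGroup.toGroup.of _

theorem commute_of_com_eq_one {w x : G} (e : w⁻¹*x⁻¹*w*x = 1) : Commute w x := by
  show w * x = x * w
  calc w*x = x*w*(w⁻¹*x⁻¹*w*x) := by group
    _ = x*w := by rw [e, mul_one]

theorem com_eq_one_of_commute {w x : G} (e : Commute w x) : w⁻¹*x⁻¹*w*x = 1 := by
  have : w * x = x * w := e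
  calc w⁻¹*x⁻¹*w*x = w⁻¹*x⁻¹*(w*x) := by group
    _ = w⁻¹*x⁻¹*(x*w) := by rw [this]
    _ = 1 := by group

/-- classical right 2-Engel consequence of the tensor condition. -/
theorem ce_of_tmul {r : G} (h : ∀ x, tmul (r⁻¹*x⁻¹*r*x) x = 1) (x : G) :
    Commute (r⁻¹*x⁻¹*r*x) x := by
  apply commute_of_com_eq_one
  have := congrArg (lamHom G) (h x)
  rwa [lamHom_tmul, map_one] at this

/-- E2' : the fundamental linearization of the right 2⊗-Engel condition. -/
theorem E2lin {r : G} (hr : ∀ x, tmul (r⁻¹*x⁻¹*r*x) x = 1) (x y : G) :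
    tensorAct ((r⁻¹*x⁻¹*r*x)*y) (tmul (r⁻¹*y⁻¹*r*y) x) *
      tensorAct (x*y) (tmul (r⁻¹*x⁻¹*r*x) y) = 1 := by
  set u := r⁻¹*x⁻¹*r*x with hu
  set v := r⁻¹*y⁻¹*r*y with hv
  have s1 : tmul (r⁻¹*(x*y)⁻¹*r*(x*y)) (x*y) = 1 := hr (x*y)
  have s2 : tmul (v * (y⁻¹*u*y)) (x*y) = 1 := by
    rw [← s1]; exact tmul_congr (by rw [hu, hv]; group) rfl
  have s3 : tmul (v * (y⁻¹*u*y)) (x*y) =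
      tensorAct (y⁻¹*u*y) (tmul v (x*y)) * tmul (y⁻¹*u*y) (x*y) := tmul_mul_left _ _ _
  have s4 : tmul v (x*y) = tensorAct y (tmul v x) := by
    rw [tmul_mul_right v x y, hr y, one_mul]
  have s5 : tmul (y⁻¹*u*y) (x*y) = tensorAct (x*y) (tmul u y) := by
    have e0 : tmul (y⁻¹*u*y) (x*y) = tmul (y⁻¹*u*y) (y*(y⁻¹*x*y)) :=
      tmul_congr rfl (by group)
    rw [e0, tmul_mul_right (y⁻¹*u*y) y (y⁻¹*x*y)]
    have e1 : tmul (y⁻¹*u*y) (y⁻¹*x*y) = tensorAct y (tmul u x) := by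
      rw [tensorAct_tmul]
    have e2 : tmul u x = 1 := hr x
    rw [e1, e2, map_one, one_mul]
    have e3 : tmul (y⁻¹*u*y) y = tensorAct y (tmul u y) := by
      rw [tensorAct_tmul]; exact tmul_congr rfl (by group)
    rw [e3, act_act]
    congr 1
    group
  have s6 : tensorAct (y⁻¹*u*y) (tensorAct y (tmul v x)) = tensorAct (u*y) (tmul v x) := by
    rw [act_act]
    congr 1
    group
  rw [s3, s4, s5, s6] at s2
  exact s2
end Infra4
section Classical1

variable {G : Type*} [Group G]

/-- commutator `[a,b] = a⁻¹b⁻¹ab` -/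
def gc (a b : G) : G := a⁻¹ * b⁻¹ * a * b

theorem gc_def (a b : G) : gc a b = a⁻¹ * b⁻¹ * a * b := rfl

/-- `CE r` : `r` is a (classical) right `2`-Engel element. -/
def CE (r : G) : Prop := ∀ x : G, Commute (gc r x) x

theorem gc_one_iff {a b : G} : gc a b = 1 ↔ Commute a b :=
  ⟨fun h => commute_of_com_eq_one h, fun h => com_eq_one_of_commute h⟩

theorem gc_self (a : G) : gc a a = 1 := by simp only [gc]; group

theorem gc_mul_left (A B t : G) : gc (A*B) t = (B⁻¹ * gc A t * B) * gc B t := by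
  simp only [gc]; group

theorem gc_mul_right (A s t : G) : gc A (s*t) = gc A t * (t⁻¹ * gc A s * t) := by
  simp only [gc]; group

theorem gc_inv_rev (a b : G) : (gc a b)⁻¹ = gc b a := by simp only [gc]; group

theorem gc_conj (z a b : G) : z⁻¹ * gc a b * z = gc (z⁻¹*a*z) (z⁻¹*b*z) := by
  simp only [gc]; group

theorem gc_eq (r w : G) : gc r w = r⁻¹ * (w⁻¹*r*w) := by simp only [gc]; group

/-- normal closure generators of `r` -/
def nc (r : G) : Subgroup G := Subgroup.closure {g | ∃ t : G, g = t⁻¹*r*t}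

theorem conj_mem_nc (r t : G) : t⁻¹*r*t ∈ nc r :=
  Subgroup.subset_closure ⟨t, rfl⟩

theorem self_mem_nc (r : G) : r ∈ nc r := by
  have := conj_mem_nc r 1
  simpa using this

theorem nc_conj {r g : G} (hg : g ∈ nc r) (z : G) : z⁻¹*g*z ∈ nc r := by
  induction hg using Subgroup.closure_induction with
  | mem g hg => obtain ⟨t, rfl⟩ := hg; exact (by group : z⁻¹*(t⁻¹*r*t)*z = (t*z)⁻¹*r*(t*z)) ▸ conj_mem_nc r (t*z)
  | one => simpa using (nc r).one_mem
  | mul g h _ _ ihg ihh => exact (by group : z⁻¹*(g*h)*z = (z⁻¹*g*z)*(z⁻¹*h*z)) ▸ (nc r).mul_mem ihg ihh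
  | inv g _ ihg => exact (by group : z⁻¹*g⁻¹*z = (z⁻¹*g*z)⁻¹) ▸ (nc r).inv_mem ihg

theorem gc_mem_nc {r g : G} (hg : g ∈ nc r) (w : G) : gc g w ∈ nc r := by
  rw [gc_eq]
  exact (nc r).mul_mem ((nc r).inv_mem hg) (nc_conj hg w)

/-- `c3a` : `[r,z]` commutes with `r`. -/
theorem c3a {r : G} (hre : CE r) (z : G) : Commute (gc r z) r := by
  have h1 : Commute (gc r (z*r)) (z*r) := hre (z*r)
  have e : gc r (z*r) = r⁻¹ * gc r z * r := by simp only [gc]; group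
  rw [e] at h1
  have h3 : Commute (gc r z) z := hre z
  have h4 : Commute (r⁻¹ * gc r z * r) (r⁻¹*z*r) := by
    have := h3.map (MulAut.conj r⁻¹).toMonoidHom
    simpa [MulAut.conj_apply, mul_assoc] using this
  have h5 : Commute (r⁻¹ * gc r z * r) ((z*r)*(r⁻¹*z*r)⁻¹) := h1.mul_right h4.inv_right
  have e2 : (z*r)*(r⁻¹*z*r)⁻¹ = r := by group
  rw [e2] at h5
  have := h5.map (MulAut.conj r).toMonoidHom
  simpa [MulAut.conj_apply, mul_assoc] using this

/-- `c3c` : conjugates of `r` commute pairwise. -/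
theorem c3c {r : G} (hre : CE r) (s t : G) : Commute (s⁻¹*r*s) (t⁻¹*r*t) := by
  have base : ∀ z : G, Commute r (z⁻¹*r*z) := by
    intro z
    have h1 : Commute r (gc r z) := (c3a hre z).symm
    have h2 : Commute r (r * gc r z) := (Commute.refl r).mul_right h1
    have e : r * gc r z = z⁻¹*r*z := by simp only [gc]; group
    rwa [e] at h2
  have h' := (base (t*s⁻¹)).map (MulAut.conj s⁻¹).toMonoidHom
  simp only [MulEquiv.coe_toMonoidHom, MulAut.conj_apply, inv_inv] at h'
  have e2 : s⁻¹ * ((t*s⁻¹)⁻¹*r*(t*s⁻¹)) * s = t⁻¹*r*t := by group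
  rwa [e2] at h'

/-- elements of the normal closure of a 2-Engel element commute. -/
theorem nc_ab {r : G} (hre : CE r) {g h : G} (hg : g ∈ nc r) (hh : h ∈ nc r) :
    Commute g h := by
  induction hg using Subgroup.closure_induction with
  | mem g hg =>
    obtain ⟨s, rfl⟩ := hg
    induction hh using Subgroup.closure_induction with
    | mem h hh => obtain ⟨t, rfl⟩ := hh; exact c3c hre s t
    | one => exact Commute.one_right _
    | mul u v _ _ ihu ihv => exact ihu.mul_right ihv
    | inv u _ ihu => exact ihu.inv_right
  | one => exact Commute.one_left _
  | mul u v _ _ ihu ihv => exact ihu.mul_left ihv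
  | inv u _ ihu => exact ihu.inv_left

end Classical1
section Classical2

variable {G : Type*} [Group G]

/-- `c4` / (i') : `[r,x,y]^x = [r,y,x]⁻¹` for a right 2-Engel element `r`. -/
theorem c4 {r : G} (hre : CE r) (x y : G) :
    x⁻¹ * gc (gc r x) y * x = (gc (gc r y) x)⁻¹ := by
  have cu : gc (gc r x) x = 1 := gc_one_iff.mpr (hre x)
  have cv : gc (gc r y) y = 1 := gc_one_iff.mpr (hre y)
  have h0 : gc (gc r (x*y)) (x*y) = 1 := gc_one_iff.mpr (hre (x*y))
  have e1 : gc r (x*y) = gc r y * (y⁻¹ * gc r x * y) := by simp only [gc]; group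
  rw [e1, gc_mul_left] at h0
  have e2 : gc (gc r y) (x*y) = y⁻¹ * gc (gc r y) x * y := by
    rw [gc_mul_right, cv, one_mul]
  have i1 : gc (y⁻¹ * gc r x * y) (x*y) = y⁻¹ * gc (gc r x) (y*x) * y := by
    simp only [gc]; group
  have i2 : gc (gc r x) (y*x) = x⁻¹ * gc (gc r x) y * x := by
    rw [gc_mul_right, cu, one_mul]
  rw [e2, i1, i2] at h0
  have e4 : y⁻¹*(x⁻¹*(gc (gc r x) y)*x)*y =
      ((y⁻¹ * gc r x * y)⁻¹ * (y⁻¹ * gc (gc r y) x * y) * (y⁻¹ * gc r x * y))⁻¹ :=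
    eq_inv_of_mul_eq_one_right h0
  have e5 : x⁻¹ * gc (gc r x) y * x =
      (gc r x)⁻¹ * (gc (gc r y) x)⁻¹ * (gc r x) := by
    calc x⁻¹ * gc (gc r x) y * x
        = y*(y⁻¹*(x⁻¹*(gc (gc r x) y)*x)*y)*y⁻¹ := by group
      _ = y*((y⁻¹ * gc r x * y)⁻¹ * (y⁻¹ * gc (gc r y) x * y) * (y⁻¹ * gc r x * y))⁻¹*y⁻¹ := by
            rw [e4]
      _ = (gc r x)⁻¹ * (gc (gc r y) x)⁻¹ * (gc r x) := by group
  have hq : gc (gc r y) x ∈ nc r := gc_mem_nc (gc_mem_nc (self_mem_nc r) y) x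
  have hu : gc r x ∈ nc r := gc_mem_nc (self_mem_nc r) x
  have hcq : (gc (gc r y) x)⁻¹ * gc r x = gc r x * (gc (gc r y) x)⁻¹ :=
    ((nc_ab hre hq hu).inv_left).eq
  rw [e5]
  calc (gc r x)⁻¹ * (gc (gc r y) x)⁻¹ * gc r x
      = (gc r x)⁻¹ * ((gc (gc r y) x)⁻¹ * gc r x) := by group
    _ = (gc r x)⁻¹ * (gc r x * (gc (gc r y) x)⁻¹) := by rw [hcq]
    _ = (gc (gc r y) x)⁻¹ := by group

/-- `c5` / CL-G' : `[r,y]` commutes with every commutator, for right 2-Engel `r`. -/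
theorem c5 {r : G} (hre : CE r) (y x w : G) : Commute (gc r y) (gc x w) := by
  -- put z := w⁻¹ ; c := gc x z⁻¹ = gc x w
  set z := w⁻¹ with hz
  have hzz : w = z⁻¹ := by rw [hz, inv_inv]
  rw [hzz]
  set c := gc x z⁻¹ with hc
  -- instance of c4 with y := y*z
  have h0 := c4 hre x (y*z)
  -- expand LHS
  have l1 : gc (gc r x) (y*z) = gc (gc r x) z * (z⁻¹ * gc (gc r x) y * z) :=
    gc_mul_right _ _ _
  -- expand RHS
  have r1 : gc r (y*z) = gc r z * (z⁻¹ * gc r y * z) := by simp only [gc]; group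
  have r2 : gc (gc r z * (z⁻¹ * gc r y * z)) x =
      ((z⁻¹ * gc r y * z)⁻¹ * gc (gc r z) x * (z⁻¹ * gc r y * z)) *
        gc (z⁻¹ * gc r y * z) x := gc_mul_left _ _ _
  have r3 : gc (z⁻¹ * gc r y * z) x = z⁻¹ * gc (gc r y) (z*x*z⁻¹) * z := by
    simp only [gc]; group
  have r4 : gc (gc r y) (z*x*z⁻¹) =
      gc (gc r y) (gc x z⁻¹) * ((gc x z⁻¹)⁻¹ * gc (gc r y) x * (gc x z⁻¹)) := by
    have e : z*x*z⁻¹ = x * gc x z⁻¹ := by simp only [gc]; group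
    rw [e, gc_mul_right]
  rw [l1, r1, r2, r3, r4] at h0
  -- abbreviations
  set A := gc (gc r x) z with hA
  set B := gc (gc r x) y with hB
  set q1 := gc (gc r z) x with hq1
  set D := gc (gc r y) (gc x z⁻¹) with hD
  set Epx := gc (gc r y) x with hE
  set v := gc r y with hv
  -- memberships
  have mA : A ∈ nc r := gc_mem_nc (gc_mem_nc (self_mem_nc r) x) z
  have mB : B ∈ nc r := gc_mem_nc (gc_mem_nc (self_mem_nc r) x) y
  have mq1 : q1 ∈ nc r := gc_mem_nc (gc_mem_nc (self_mem_nc r) z) x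
  have mD : D ∈ nc r := gc_mem_nc (gc_mem_nc (self_mem_nc r) y) _
  have mE : Epx ∈ nc r := gc_mem_nc (gc_mem_nc (self_mem_nc r) y) x
  have mw : z⁻¹ * gc r y * z ∈ nc r := nc_conj (gc_mem_nc (self_mem_nc r) y) z
  -- c4 instances
  have k1 : x⁻¹ * A * x = q1⁻¹ := c4 hre x z
  have k2 : x⁻¹ * B * x = Epx⁻¹ := c4 hre x y
  -- LHS of h0 equals q1⁻¹ * ((z*x)⁻¹ * B * (z*x))
  have lhs1 : x⁻¹ * (A * (z⁻¹ * B * z)) * x = (x⁻¹*A*x) * ((z*x)⁻¹ * B * (z*x)) := by group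
  -- (z*x) = x*c*z , so B^{zx} = z⁻¹*c⁻¹*(x⁻¹*B*x)*c*z
  have zx : z*x = x*c*z := by rw [hc]; simp only [gc]; group
  have lhs2 : (z*x)⁻¹ * B * (z*x) = z⁻¹*c⁻¹*(x⁻¹*B*x)*c*z := by rw [zx]; group
  rw [lhs1, lhs2, k1, k2] at h0
  -- now h0 : q1⁻¹ * (z⁻¹*c⁻¹*Epx⁻¹*c*z) = (stuff)⁻¹
  -- compute the RHS inverse explicitly
  have rhs1 : (((z⁻¹ * v * z)⁻¹ * q1 * (z⁻¹ * v * z)) * (z⁻¹ * (D * (c⁻¹ * Epx * c)) * z))⁻¹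
      = (z⁻¹ * ((c⁻¹ * Epx⁻¹ * c) * D⁻¹) * z) * ((z⁻¹ * v * z)⁻¹ * q1⁻¹ * (z⁻¹ * v * z)) := by
    group
  rw [rhs1] at h0
  -- commutation: w := z⁻¹ v z commutes with q1
  have cwq : (z⁻¹ * v * z)⁻¹ * q1⁻¹ * (z⁻¹ * v * z) = q1⁻¹ := by
    have hcm : q1⁻¹ * (z⁻¹ * v * z) = (z⁻¹ * v * z) * q1⁻¹ := ((nc_ab hre mq1 mw).inv_left).eq
    calc (z⁻¹ * v * z)⁻¹ * q1⁻¹ * (z⁻¹ * v * z) = (z⁻¹ * v * z)⁻¹ * (q1⁻¹ * (z⁻¹ * v * z)) := by group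
      _ = (z⁻¹ * v * z)⁻¹ * ((z⁻¹ * v * z) * q1⁻¹) := by rw [hcm]
      _ = q1⁻¹ := by group
  rw [cwq] at h0
  -- set X := z⁻¹*c⁻¹*Epx⁻¹*c*z
  have hXmem : z⁻¹*(c⁻¹*Epx⁻¹*c)*z ∈ nc r := nc_conj (nc_conj ((nc r).inv_mem mE) c) z
  have hqX : q1⁻¹ * (z⁻¹*(c⁻¹*Epx⁻¹*c)*z) = (z⁻¹*(c⁻¹*Epx⁻¹*c)*z) * q1⁻¹ :=
    ((nc_ab hre hXmem ((nc r).inv_mem mq1)).symm).eq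
  -- rearrange h0 to isolate D
  have h1 : (z⁻¹*(c⁻¹*Epx⁻¹*c)*z) * q1⁻¹ =
      (z⁻¹*(c⁻¹*Epx⁻¹*c)*z) * ((z⁻¹ * D⁻¹ * z) * q1⁻¹) := by
    calc (z⁻¹*(c⁻¹*Epx⁻¹*c)*z) * q1⁻¹ = q1⁻¹ * (z⁻¹*(c⁻¹*Epx⁻¹*c)*z) := by rw [hqX]
      _ = q1⁻¹ * (z⁻¹*c⁻¹*Epx⁻¹*c*z) := by group
      _ = (z⁻¹ * ((c⁻¹ * Epx⁻¹ * c) * D⁻¹) * z) * q1⁻¹ := h0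
      _ = (z⁻¹*(c⁻¹*Epx⁻¹*c)*z) * ((z⁻¹ * D⁻¹ * z) * q1⁻¹) := by group
  have h2 : q1⁻¹ = (z⁻¹ * D⁻¹ * z) * q1⁻¹ := mul_left_cancel h1
  have h3 : (1:G) = z⁻¹ * D⁻¹ * z :=
    mul_right_cancel (b := q1⁻¹) (by rw [one_mul]; exact h2)
  have h4 : D = 1 := by
    have := congrArg (fun t => z * t * z⁻¹) h3
    rw [show z*(1:G)*z⁻¹ = 1 by group, show z*(z⁻¹*D⁻¹*z)*z⁻¹ = D⁻¹ by group] at this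
    rw [← inv_inv D, ← this, inv_one]
  exact gc_one_iff.mp h4

end Classical2
section Classical3

variable {G : Type*} [Group G]

theorem gc_one_left (y : G) : gc 1 y = 1 := by simp only [gc]; group

theorem gc_inv_left {u g : G} (h : Commute u (gc u g)) : gc u⁻¹ g = (gc u g)⁻¹ := by
  have h2 : Commute u (g⁻¹*u⁻¹*g) := by
    have e : u * gc u g = g⁻¹*u*g := by simp only [gc]; group
    have h3 := ((Commute.refl u).mul_right h).inv_right
    rw [e] at h3
    rwa [show (g⁻¹*u*g)⁻¹ = g⁻¹*u⁻¹*g by group] at h3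
  have h3 : u * (g⁻¹*u⁻¹*g) = (g⁻¹*u⁻¹*g) * u := h2.eq
  calc gc u⁻¹ g = u*(g⁻¹*u⁻¹*g) := by simp only [gc]; group
    _ = (g⁻¹*u⁻¹*g)*u := h3
    _ = (gc u g)⁻¹ := by simp only [gc]; group

theorem gc_inv_right {u g : G} (h : Commute (gc u g) g) : gc u g⁻¹ = (gc u g)⁻¹ := by
  have e : gc u g⁻¹ = g * (gc u g)⁻¹ * g⁻¹ := by simp only [gc]; group
  rw [e]
  have h2 : (gc u g)⁻¹ * g⁻¹ = g⁻¹ * (gc u g)⁻¹ := (h.inv_left.inv_right).eq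
  rw [mul_assoc, h2]
  group

/-- `c6` / SWAP : `[u,y,g] = [u,g,y]` when `u` is 2-Engel and commutes with `G'`. -/
theorem c6 {u : G} (hue : CE u) (hu2 : ∀ x w, Commute u (gc x w)) (y g : G) :
    gc (gc u y) g = gc (gc u g) y := by
  have e2 : gc u⁻¹ g = (gc u g)⁻¹ := gc_inv_left (hu2 u g)
  have i1 : gc (gc u y) g =
      ((y⁻¹*u*y)⁻¹ * gc u⁻¹ g * (y⁻¹*u*y)) * gc (y⁻¹*u*y) g := by
    have e : gc u y = u⁻¹ * (y⁻¹*u*y) := gc_eq u y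
    rw [e, gc_mul_left]
  have i2 : gc (y⁻¹*u*y) g = y⁻¹ * gc u (y*g*y⁻¹) * y := by simp only [gc]; group
  have i3 : gc u (y*g*y⁻¹) = gc u g := by
    have e : y*g*y⁻¹ = g * gc g y⁻¹ := by simp only [gc]; group
    rw [e, gc_mul_right]
    rw [gc_one_iff.mpr (hu2 g y⁻¹), one_mul]
    have hc : Commute (gc u g) (gc g y⁻¹) := c5 hue g g y⁻¹
    calc (gc g y⁻¹)⁻¹ * gc u g * gc g y⁻¹ = (gc g y⁻¹)⁻¹ * (gc u g * gc g y⁻¹) := by group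
      _ = (gc g y⁻¹)⁻¹ * (gc g y⁻¹ * gc u g) := by rw [hc.eq]
      _ = gc u g := by group
  have i5 : (y⁻¹*u*y)⁻¹ * (gc u g)⁻¹ * (y⁻¹*u*y) = (gc u g)⁻¹ := by
    have hcu : Commute (gc u g) (y⁻¹*u*y) := by
      have e : y⁻¹*u*y = u * gc u y := by simp only [gc]; group
      rw [e]
      exact ((hu2 u g).symm).mul_right (c5 hue g u y)
    have h2 : (gc u g)⁻¹ * (y⁻¹*u*y) = (y⁻¹*u*y) * (gc u g)⁻¹ := hcu.inv_left.eq
    calc (y⁻¹*u*y)⁻¹ * (gc u g)⁻¹ * (y⁻¹*u*y) = (y⁻¹*u*y)⁻¹ * ((gc u g)⁻¹ * (y⁻¹*u*y)) := by group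
      _ = (y⁻¹*u*y)⁻¹ * ((y⁻¹*u*y) * (gc u g)⁻¹) := by rw [h2]
      _ = (gc u g)⁻¹ := by group
  rw [i1, e2, i5, i2, i3]
  rw [gc_eq (gc u g) y]

/-- `[r,x,y]` commutes with `x`. -/
theorem p_comm_x {r : G} (hre : CE r) (hcex : CE (gc r x)) (y : G) :
    Commute (gc (gc r x) y) x := by
  apply gc_one_iff.mp
  rw [c6 hcex (fun x' w => c5 hre x x' w) y x]
  rw [gc_one_iff.mpr (hre x), gc_one_left]

/-- `c7` : clean antisymmetry `[r,x,y] = [r,y,x]⁻¹`. -/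
theorem c7 {r : G} (hre : CE r) {x : G} (hcex : CE (gc r x)) (y : G) :
    gc (gc r x) y = (gc (gc r y) x)⁻¹ := by
  have h := c4 hre x y
  have hc : x⁻¹ * gc (gc r x) y * x = gc (gc r x) y := by
    have h2 : gc (gc r x) y * x = x * gc (gc r x) y := (p_comm_x hre hcex y).eq
    calc x⁻¹ * gc (gc r x) y * x = x⁻¹ * (gc (gc r x) y * x) := by group
      _ = x⁻¹ * (x * gc (gc r x) y) := by rw [h2]
      _ = gc (gc r x) y := by group
  rw [← hc]
  exact h

/-- `c8` / SQ : `[r, [x,y]] = [r,x,y]²`. -/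
theorem c8 {r : G} (hre : CE r) {x y : G} (hcex : CE (gc r x)) (hcey : CE (gc r y)) :
    gc r (gc x y) = gc (gc r x) y * gc (gc r x) y := by
  set u := gc r x with hu
  set p := gc u y with hp
  have m1 : gc r (gc x y) = gc r y * (y⁻¹ * gc r (x⁻¹*y⁻¹*x) * y) := by
    have e : gc x y = (x⁻¹*y⁻¹*x) * y := by simp only [gc]
    rw [e, gc_mul_right]
  have m2 : gc r (x⁻¹*y⁻¹*x) = x⁻¹ * gc (x*r*x⁻¹) y⁻¹ * x := by simp only [gc]; group
  have m3 : x*r*x⁻¹ = r * (gc r x)⁻¹ := by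
    have e1 : gc r x⁻¹ = x * (gc r x)⁻¹ * x⁻¹ := by simp only [gc]; group
    have e2 : gc r x⁻¹ = (gc r x)⁻¹ := by
      rw [e1]
      have h2 : (gc r x)⁻¹ * x⁻¹ = x⁻¹ * (gc r x)⁻¹ := ((hre x).inv_left.inv_right).eq
      rw [mul_assoc, h2]; group
    calc x*r*x⁻¹ = r * gc r x⁻¹ := by simp only [gc]; group
      _ = r * (gc r x)⁻¹ := by rw [e2]
  have m4 : gc (r * u⁻¹) y⁻¹ = (u * gc r y⁻¹ * u⁻¹) * gc u⁻¹ y⁻¹ := by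
    have := gc_mul_left r u⁻¹ y⁻¹
    rw [inv_inv] at this
    exact this
  have m5 : gc r y⁻¹ = (gc r y)⁻¹ := by
    have e1 : gc r y⁻¹ = y * (gc r y)⁻¹ * y⁻¹ := by simp only [gc]; group
    rw [e1]
    have h2 : (gc r y)⁻¹ * y⁻¹ = y⁻¹ * (gc r y)⁻¹ := ((hre y).inv_left.inv_right).eq
    rw [mul_assoc, h2]; group
  have m6 : u * (gc r y)⁻¹ * u⁻¹ = (gc r y)⁻¹ := by
    have hc : Commute ((gc r y)⁻¹) u :=
      (nc_ab hre (gc_mem_nc (self_mem_nc r) y) (gc_mem_nc (self_mem_nc r) x)).inv_left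
    calc u * (gc r y)⁻¹ * u⁻¹ = u * ((gc r y)⁻¹ * u⁻¹) := by group
      _ = u * (u⁻¹ * (gc r y)⁻¹) := by rw [hc.inv_right.eq]
      _ = (gc r y)⁻¹ := by group
  have m7 : gc u⁻¹ y⁻¹ = (gc u y⁻¹)⁻¹ := gc_inv_left (c5 hre x u y⁻¹)
  have m8 : gc u y⁻¹ = (gc u y)⁻¹ := gc_inv_right (hcex y)
  have m9 : gc r (x⁻¹*y⁻¹*x) = x⁻¹ * ((gc r y)⁻¹ * p) * x := by
    rw [m2, m3, m4, m5, m6, m7, m8, inv_inv, hp]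
  have pxy : (x*y)⁻¹ * p * (x*y) = p := by
    have hpx : Commute p x := p_comm_x hre hcex y
    have hpy : Commute p y := hcex y
    have h2 : p * (x*y) = (x*y) * p := hpx.mul_right hpy
    calc (x*y)⁻¹ * p * (x*y) = (x*y)⁻¹ * (p * (x*y)) := by group
      _ = (x*y)⁻¹ * ((x*y) * p) := by rw [h2]
      _ = p := by group
  have m12 : (x*y)⁻¹ * gc r y * (x*y) = gc r y * p⁻¹ := by
    have e1 : (x*y)⁻¹ * gc r y * (x*y) = gc r y * gc (gc r y) (x*y) := by
      rw [gc_eq (gc r y) (x*y)]; group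
    have e2 : gc (gc r y) (x*y) = gc (gc r y) y * (y⁻¹ * gc (gc r y) x * y) :=
      gc_mul_right _ _ _
    have e3 : gc (gc r y) y = 1 := gc_one_iff.mpr (hre y)
    have e4 : gc (gc r y) x = p⁻¹ := by
      rw [hp, c7 hre hcex y, inv_inv]
    have e5 : y⁻¹ * p⁻¹ * y = p⁻¹ := by
      have h2 : p⁻¹ * y = y * p⁻¹ := (hcex y).inv_left.eq
      calc y⁻¹ * p⁻¹ * y = y⁻¹ * (p⁻¹ * y) := by group
        _ = y⁻¹ * (y * p⁻¹) := by rw [h2]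
        _ = p⁻¹ := by group
    rw [e1, e2, e3, one_mul, e4, e5]
  have m13 : gc r (gc x y) = gc r y * ((x*y)⁻¹ * ((gc r y)⁻¹ * p) * (x*y)) := by
    rw [m1, m9]; group
  rw [m13]
  have e6 : (x*y)⁻¹ * ((gc r y)⁻¹ * p) * (x*y) =
      ((x*y)⁻¹ * (gc r y)⁻¹ * (x*y)) * ((x*y)⁻¹ * p * (x*y)) := by group
  rw [e6, pxy]
  have e7 : (x*y)⁻¹ * (gc r y)⁻¹ * (x*y) = (gc r y * p⁻¹)⁻¹ := by
    rw [← m12]; group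
  rw [e7]
  have hc : Commute p (gc r y) := (c5 hre y u y).symm
  calc gc r y * ((gc r y * p⁻¹)⁻¹ * p) = gc r y * (p * (gc r y)⁻¹ * p) := by group
    _ = gc r y * ((gc r y)⁻¹ * p * p) := by
        rw [show p * (gc r y)⁻¹ = (gc r y)⁻¹ * p from hc.inv_right.eq]
    _ = p * p := by group

/-- `c9` : weight-4 commutators with a `G'`-central 2-Engel base are involutions. -/
theorem c9 {u : G} (hue : CE u) (hu2 : ∀ x w, Commute u (gc x w)) {y : G}
    (hcey : CE (gc u y)) (g : G) :
    gc (gc u y) g * gc (gc u y) g = 1 := by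
  set w := gc u g with hw
  have s2 : gc (gc u y) g = gc w y := c6 hue hu2 y g
  have s1 : y⁻¹ * gc w y * y = (gc w y)⁻¹ := by
    have h := c4 hue y g
    rw [s2] at h
    rw [← hw] at h
    exact h
  have s3 : (y*y)⁻¹ * w * (y*y) = w := by
    have e1 : y⁻¹*w*y = w * gc w y := by rw [gc_eq]; group
    calc (y*y)⁻¹ * w * (y*y) = y⁻¹*(y⁻¹*w*y)*y := by group
      _ = y⁻¹*(w * gc w y)*y := by rw [e1]
      _ = (y⁻¹*w*y)*(y⁻¹*(gc w y)*y) := by group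
      _ = (w * gc w y)*(gc w y)⁻¹ := by rw [e1, s1]
      _ = w := by group
  have s4 : gc u (y*y) = gc u y * gc u y := by
    rw [gc_mul_right]
    congr 1
    have h2 : gc u y * y = y * gc u y := (hue y).eq
    calc y⁻¹ * gc u y * y = y⁻¹ * (gc u y * y) := by group
      _ = y⁻¹ * (y * gc u y) := by rw [h2]
      _ = gc u y := by group
  have s5 : gc (gc u (y*y)) g = gc (gc u y) g * gc (gc u y) g := by
    rw [s4, gc_mul_left]
    congr 1
    have hc : Commute (gc (gc u y) g) (gc u y) := c5 hcey g u y
    calc (gc u y)⁻¹ * gc (gc u y) g * (gc u y)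
        = (gc u y)⁻¹ * (gc (gc u y) g * (gc u y)) := by group
      _ = (gc u y)⁻¹ * ((gc u y) * gc (gc u y) g) := by rw [hc.eq]
      _ = gc (gc u y) g := by group
  have s6 : gc (gc u (y*y)) g = 1 := by
    rw [c6 hue hu2 (y*y) g, ← hw, gc_eq, s3]
    group
  rw [← s5, s6]

end Classical3
section Classical4

variable {G : Type*} [Group G]
variable {RS : Subgroup G}
  (hcj : ∀ g ∈ RS, ∀ t : G, t⁻¹*g*t ∈ RS)
  (hCE : ∀ g ∈ RS, CE g)

include hcj in
theorem gc_mem_RS {g : G} (hg : g ∈ RS) (x : G) : gc g x ∈ RS := by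
  rw [gc_eq]
  exact RS.mul_mem (RS.inv_mem hg) (hcj g hg x)

variable {a b : G} (ha : a ∈ RS) (hb : b ∈ RS)

include hcj hCE ha hb

/-- `q = E⁻¹` : `[b,a,y] = [a,b,y]⁻¹`. -/
theorem c10_inv (y : G) : gc (gc b a) y = (gc (gc a b) y)⁻¹ := by
  have h : Commute (gc a b) (gc (gc a b) y) := c5 (hCE a ha) b (gc a b) y
  rw [← gc_inv_rev a b]
  exact gc_inv_left h

/-- `E = q²` : `[a,b,y] = [b,a,y]²`. -/
theorem c10_sq (y : G) :
    gc (gc a b) y = gc (gc b a) y * gc (gc b a) y := by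
  have h1 : gc (gc a b) y = (gc (gc a y) b)⁻¹ :=
    c7 (hCE a ha) (hCE _ (gc_mem_RS hcj ha b)) y
  have h2 : gc (gc a y) b = (gc b (gc a y))⁻¹ := (gc_inv_rev b (gc a y)).symm
  have h3 : gc b (gc a y) = gc (gc b a) y * gc (gc b a) y :=
    c8 (hCE b hb) (hCE _ (gc_mem_RS hcj hb a)) (hCE _ (gc_mem_RS hcj hb y))
  rw [h1, h2, h3, inv_inv]

/-- `E³ = 1`. -/
theorem c10_cube (y : G) :
    gc (gc a b) y * gc (gc a b) y * gc (gc a b) y = 1 := by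
  have h := c10_sq hcj hCE ha hb y
  rw [c10_inv hcj hCE ha hb] at h
  calc gc (gc a b) y * gc (gc a b) y * gc (gc a b) y
      = gc (gc a b) y * gc (gc a b) y * ((gc (gc a b) y)⁻¹ * (gc (gc a b) y)⁻¹) := by
        rw [← h]
    _ = 1 := by group

/-- `E` is central : `[a,b,y]` commutes with everything. -/
theorem c10_central (y z : G) : Commute (gc (gc a b) y) z := by
  set E := gc (gc a b) y with hE
  set q := gc (gc b a) y with hq
  have hab : gc a b ∈ RS := gc_mem_RS hcj ha b
  have hba : gc b a ∈ RS := gc_mem_RS hcj hb a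
  have t1 : gc E z * gc E z = 1 := by
    rw [hE]
    exact c9 (hCE _ hab) (fun x w => c5 (hCE a ha) b x w)
      (hCE _ (gc_mem_RS hcj hab y)) z
  have t3 : gc q z = (gc E z)⁻¹ := by
    have e1 : q = E⁻¹ := by rw [hq, hE, c10_inv hcj hCE ha hb]
    rw [e1]
    exact gc_inv_left (c5 (hCE _ hab) y E z)
  have t2 : gc E z = gc q z * gc q z := by
    have hqc : Commute (gc q z) q := (c5 (hCE _ hba) y q z).symm
    have e2 : E = q * q := c10_sq hcj hCE ha hb y
    calc gc E z = gc (q*q) z := by rw [← e2]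
      _ = (q⁻¹ * gc q z * q) * gc q z := gc_mul_left _ _ _
      _ = gc q z * gc q z := by
          congr 1
          calc q⁻¹ * gc q z * q = q⁻¹ * (gc q z * q) := by group
            _ = q⁻¹ * (q * gc q z) := by rw [hqc.eq]
            _ = gc q z := by group
  apply gc_one_iff.mp
  rw [t2, t3, ← mul_inv_rev, t1, inv_one]

/-- `c12a` : `[a,z,b] = [a,b,z]⁻¹`. -/
theorem c12a (z : G) : gc (gc a z) b = (gc (gc a b) z)⁻¹ :=
  c7 (hCE a ha) (hCE _ (gc_mem_RS hcj ha z)) b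

/-- `c12b` : `[a,z,z']` commutes with `b`. -/
theorem c12b (z z' : G) : Commute (gc (gc a z) z') b := by
  apply gc_one_iff.mp
  have h := c6 (hCE _ (gc_mem_RS hcj ha z)) (fun x w => c5 (hCE a ha) z x w) z' b
  rw [h, c12a hcj hCE ha hb z]
  apply gc_one_iff.mpr
  exact ((c10_central hcj hCE ha hb z z').inv_left).symm.symm

end Classical4
section Tensor

variable {G : Type*} [Group G]
variable {R : Subgroup G} (hR : (R : Set G) = {g : G | ∀ x : G, tmul (g⁻¹ * x⁻¹ * g * x) x = 1})

include hR in
theorem Rmem {r : G} (hr : r ∈ R) : ∀ x : G, tmul (gc r x) x = 1 := by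
  have h : r ∈ {g : G | ∀ x : G, tmul (g⁻¹ * x⁻¹ * g * x) x = 1} := by rw [← hR]; exact hr
  exact h

include hR in
theorem R_conj {r : G} (hr : r ∈ R) (z : G) : z⁻¹*r*z ∈ R := by
  rw [← SetLike.mem_coe, hR]
  intro w
  have h1 := Rmem hR hr (z*w*z⁻¹)
  have h2 := congrArg (tensorAct z) h1
  rw [map_one, tensorAct_tmul] at h2
  rw [← h2]
  exact tmul_congr (by simp only [gc]; group) (by group)

include hR in
theorem R_CE {r : G} (hr : r ∈ R) : CE r := fun x => ce_of_tmul (Rmem hR hr) x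

variable {a b : G} (ha : a ∈ R) (hb : b ∈ R)

include hR ha hb

theorem hd_mem : gc a b ∈ R := by
  rw [gc_eq]
  exact R.mul_mem (R.inv_mem ha) (R_conj hR ha b)

/-- `E x = [a,b,x]` is central in `G`. -/
theorem Ecent (x z : G) : Commute (gc (gc a b) x) z :=
  c10_central (fun g hg t => R_conj hR hg t) (fun g hg => R_CE hR hg) ha hb x z

theorem Ecube (x : G) :
    gc (gc a b) x * gc (gc a b) x * gc (gc a b) x = 1 :=
  c10_cube (fun g hg t => R_conj hR hg t) (fun g hg => R_CE hR hg) ha hb x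

/-- `ψ x y := tmul [a,b,x] y` is central in the tensor square. -/
theorem psi_central (x y : G) (t : TensorSquare G) :
    t * tmul (gc (gc a b) x) y = tmul (gc (gc a b) x) y * t :=
  tmul_central_of_commute (Ecent hR ha hb x y).eq t

/-- `tmul d y` is central in the tensor square. -/
theorem dten_central (y : G) (t : TensorSquare G) :
    t * tmul (gc a b) y = tmul (gc a b) y * t :=
  tmul_central_of_central (fun w => (Ecent hR ha hb y w).eq) t

theorem act_E (x : G) (t : TensorSquare G) :
    tensorAct (gc (gc a b) x) t = t :=
  act_of_central (fun w => (Ecent hR ha hb x w).eq) t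

theorem act_E_inv (x : G) (t : TensorSquare G) :
    tensorAct (gc (gc a b) x)⁻¹ t = t :=
  act_of_central (central_inv (fun w => (Ecent hR ha hb x w).eq)) t

/-- `ψ` kills commutators in the second slot. -/
theorem psi_G' (x z w : G) : tmul (gc (gc a b) x) (gc z w) = 1 := by
  have h := E2lin (Rmem hR (hd_mem hR ha hb)) x (gc z w)
  have e1 : gc (gc a b) (gc z w) = 1 :=
    gc_one_iff.mpr (c5 (R_CE hR ha) b z w)
  rw [show ((gc a b)⁻¹ * (gc z w)⁻¹ * (gc a b) * (gc z w)) = gc (gc a b) (gc z w) from rfl,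
    e1] at h
  rw [tmul_one_left, map_one, one_mul] at h
  exact act_eq_one h

/-- `ψ` is invariant under the action of `G`. -/
theorem psi_act (w x y : G) :
    tensorAct w (tmul (gc (gc a b) x) y) = tmul (gc (gc a b) x) y := by
  rw [tensorAct_tmul]
  have e1 : tmul (w⁻¹ * gc (gc a b) x * w) (w⁻¹*y*w) =
      tmul (gc (gc a b) x) (y * gc y w) := by
    refine tmul_congr ?_ (by simp only [gc]; group)
    have h2 : gc (gc a b) x * w = w * gc (gc a b) x := (Ecent hR ha hb x w).eq
    calc w⁻¹ * gc (gc a b) x * w = w⁻¹ * (gc (gc a b) x * w) := by group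
      _ = w⁻¹ * (w * gc (gc a b) x) := by rw [h2]
      _ = gc (gc a b) x := by group
  rw [e1, tmul_mul_right, psi_G' hR ha hb, one_mul]
  have e2 : tensorAct (gc y w) (tmul (gc (gc a b) x) y) =
      (tmul y w)⁻¹ * tmul (gc (gc a b) x) y * tmul y w := act_commutator y w _
  rw [e2, psi_central hR ha hb x y ((tmul y w)⁻¹)]
  group

/-- antisymmetry of `ψ`. -/
theorem psi_anti (x y : G) :
    tmul (gc (gc a b) x) y * tmul (gc (gc a b) y) x = 1 := by
  have h := E2lin (Rmem hR (hd_mem hR ha hb)) x y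
  have e1 : tensorAct ((gc a b)⁻¹ * x⁻¹ * (gc a b) * x * y)
        (tmul ((gc a b)⁻¹ * y⁻¹ * (gc a b) * y) x) = tmul (gc (gc a b) y) x := by
    show tensorAct (gc (gc a b) x * y) (tmul (gc (gc a b) y) x) = _
    rw [← act_act, psi_act hR ha hb, psi_act hR ha hb]
  have e2 : tensorAct (x * y) (tmul ((gc a b)⁻¹ * x⁻¹ * (gc a b) * x) y) =
      tmul (gc (gc a b) x) y := by
    show tensorAct (x * y) (tmul (gc (gc a b) x) y) = _
    rw [psi_act hR ha hb]
  rw [e1, e2] at h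
  rw [psi_central hR ha hb y x]
  exact h

theorem psi_cube (x y : G) :
    tmul (gc (gc a b) x) y * tmul (gc (gc a b) x) y * tmul (gc (gc a b) x) y = 1 := by
  have e1 : tmul (gc (gc a b) x * gc (gc a b) x) y =
      tmul (gc (gc a b) x) y * tmul (gc (gc a b) x) y := by
    rw [tmul_mul_left, act_E hR ha hb]
  have e2 : tmul (gc (gc a b) x * gc (gc a b) x * gc (gc a b) x) y =
      tmul (gc (gc a b) x) y * tmul (gc (gc a b) x) y * tmul (gc (gc a b) x) y := by
    rw [tmul_mul_left, act_E hR ha hb, e1]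
  rw [← e2, Ecube hR ha hb, tmul_one_left]

end Tensor
section Tensor2

variable {G : Type*} [Group G]
variable {R : Subgroup G} (hR : (R : Set G) = {g : G | ∀ x : G, tmul (g⁻¹ * x⁻¹ * g * x) x = 1})
variable {a b : G} (ha : a ∈ R) (hb : b ∈ R)

include hR ha hb

/-- T★★ : `d ⊗ [z,z'] = ψ(z,z')²`. -/
theorem dten_comm (z z' : G) :
    tmul (gc a b) (gc z z') =
      tmul (gc (gc a b) z) z' * tmul (gc (gc a b) z) z' := by
  set K := tmul (gc a b) (gc z z') with hK
  set K' := tmul (gc a b) (gc z' z) with hK'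
  set A := tmul (gc a b) z' with hA
  set B := tmul (gc a b) z with hB
  set P2 := tmul (gc (gc a b) z) z' with hP2
  set P1 := tmul (gc (gc a b) z') z with hP1
  have swapK : ∀ t, t * K = K * t := dten_central hR ha hb (gc z z')
  have swapA : ∀ t, t * A = A * t := dten_central hR ha hb z'
  have swapB : ∀ t, t * B = B * t := dten_central hR ha hb z
  have swapP1 : ∀ t, t * P1 = P1 * t := psi_central hR ha hb z' z
  have swapP2 : ∀ t, t * P2 = P2 * t := psi_central hR ha hb z z'
  have swapKinv : ∀ t, K⁻¹ * t = t * K⁻¹ :=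
    fun t => (central_inv (fun w => (swapK w).symm) t)
  -- auxiliary : tmul d (z * gc z z') = K * B
  have auxd : tmul (gc a b) (z * gc z z') = K * B := by
    rw [tmul_mul_right]
    rw [show tensorAct (gc z z') (tmul (gc a b) z) =
        (tmul z z')⁻¹ * tmul (gc a b) z * tmul z z' from act_commutator z z' _]
    rw [hB, swapB ((tmul z z')⁻¹)]
    group
    rfl
  -- auxiliary : tmul (gc d z') (z * gc z z') = P1
  have auxp : tmul (gc (gc a b) z') (z * gc z z') = P1 := by
    rw [tmul_mul_right, psi_G' hR ha hb, one_mul]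
    rw [show tensorAct (gc z z') (tmul (gc (gc a b) z') z) =
        (tmul z z')⁻¹ * tmul (gc (gc a b) z') z * tmul z z' from act_commutator z z' _]
    rw [hP1, swapP1 ((tmul z z')⁻¹)]
    group
    rfl
  have eq1 : tmul (gc a b) (z*z') = A * (K * B * P1) := by
    rw [tmul_mul_right]
    congr 1
    have e1 : tensorAct z' (tmul (gc a b) z) =
        tmul (gc a b * gc (gc a b) z') (z * gc z z') := by
      rw [tensorAct_tmul]
      exact tmul_congr (by simp only [gc]; group) (by simp only [gc]; group)
    rw [e1, tmul_mul_left, act_E hR ha hb, auxd, auxp]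
  -- symmetric version
  have auxd' : tmul (gc a b) (z' * gc z' z) = K' * A := by
    rw [tmul_mul_right]
    rw [show tensorAct (gc z' z) (tmul (gc a b) z') =
        (tmul z' z)⁻¹ * tmul (gc a b) z' * tmul z' z from act_commutator z' z _]
    rw [hA, swapA ((tmul z' z)⁻¹)]
    group
    rfl
  have auxp' : tmul (gc (gc a b) z) (z' * gc z' z) = P2 := by
    rw [tmul_mul_right, psi_G' hR ha hb, one_mul]
    rw [show tensorAct (gc z' z) (tmul (gc (gc a b) z) z') =
        (tmul z' z)⁻¹ * tmul (gc (gc a b) z) z' * tmul z' z from act_commutator z' z _]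
    rw [hP2, swapP2 ((tmul z' z)⁻¹)]
    group
    rfl
  have eq2 : tmul (gc a b) (z'*z) = B * (K' * A * P2) := by
    rw [tmul_mul_right]
    congr 1
    have e1 : tensorAct z (tmul (gc a b) z') =
        tmul (gc a b * gc (gc a b) z) (z' * gc z' z) := by
      rw [tensorAct_tmul]
      exact tmul_congr (by simp only [gc]; group) (by simp only [gc]; group)
    rw [e1, tmul_mul_left, act_E hR ha hb, auxd', auxp']
  have eqK' : K' = K⁻¹ := by
    rw [hK', show gc z' z = (gc z z')⁻¹ from (gc_inv_rev z z').symm]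
    rw [tmul_inv_right]
    congr 1
    rw [show ((gc z z')⁻¹ : G) = gc z' z from gc_inv_rev z z']
    rw [show tensorAct (gc z' z) (tmul (gc a b) (gc z z')) =
        (tmul z' z)⁻¹ * tmul (gc a b) (gc z z') * tmul z' z from act_commutator z' z _]
    rw [hK, swapK ((tmul z' z)⁻¹)]
    group
    rfl
  have eq3 : tmul (gc a b) (z*z') = K * tmul (gc a b) (z'*z) := by
    have e0 : tmul (gc a b) (z*z') = tmul (gc a b) ((z'*z) * gc z z') :=
      tmul_congr rfl (by simp only [gc]; group)
    rw [e0, tmul_mul_right]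
    congr 1
    rw [show tensorAct (gc z z') (tmul (gc a b) (z'*z)) =
        (tmul z z')⁻¹ * tmul (gc a b) (z'*z) * tmul z z' from act_commutator z z' _]
    rw [dten_central hR ha hb (z'*z) ((tmul z z')⁻¹)]
    group
  -- combine
  have heq : A * (K * B * P1) = K * (B * (K⁻¹ * A * P2)) := by
    rw [← eq1, eq3, eq2, eqK']
  have lhs : A * (K * B * P1) = (A*B) * (P1*K) := by
    calc A * (K * B * P1) = A * (K * (B * P1)) := by group
      _ = A * ((B * P1) * K) := by rw [swapK (B*P1)]
      _ = (A*B) * (P1*K) := by group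
  have rhs : K * (B * (K⁻¹ * A * P2)) = (A*B) * P2 := by
    calc K * (B * (K⁻¹ * A * P2)) = K * (B * (K⁻¹ * (A * P2))) := by group
      _ = K * (B * ((A * P2) * K⁻¹)) := by rw [← swapKinv (A*P2)]
      _ = K * ((B * (A * P2)) * K⁻¹) := by group
      _ = K * (K⁻¹ * (B * (A * P2))) := by rw [swapKinv (B*(A*P2))]
      _ = B * (A * P2) := by group
      _ = (B*A) * P2 := by group
      _ = (A*B) * P2 := by rw [swapA B]
  rw [lhs, rhs] at heq
  have h2 : P1 * K = P2 := mul_left_cancel heq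
  have hanti : P2 * P1 = 1 := psi_anti hR ha hb z z'
  have hP1inv : P1 = P2⁻¹ := by
    rw [← one_mul P1, ← inv_mul_cancel P2, mul_assoc, hanti, mul_one]
  rw [hP1inv] at h2
  calc K = P2 * (P2⁻¹ * K) := by group
    _ = P2 * P2 := by rw [h2]

include hb in
theorem R_gc_mem (z : G) : gc a z ∈ R := by
  rw [gc_eq]
  exact R.mul_mem (R.inv_mem ha) (R_conj hR ha z)

/-- TΦb : `[a,z,z'] ⊗ b = ψ(z,z')`. -/
theorem p_tensor (z z' : G) :
    tmul (gc (gc a z) z') b = tmul (gc (gc a b) z) z' := by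
  have h := E2lin (Rmem hR (R_gc_mem hR ha hb z)) b z'
  rw [show ((gc a z)⁻¹ * b⁻¹ * gc a z * b) = gc (gc a z) b from rfl,
      show ((gc a z)⁻¹ * z'⁻¹ * gc a z * z') = gc (gc a z) z' from rfl] at h
  rw [c12a (fun g hg t => R_conj hR hg t) (fun g hg => R_CE hR hg) ha hb z] at h
  have e2 : tmul (gc (gc a b) z)⁻¹ z' = (tmul (gc (gc a b) z) z')⁻¹ :=
    tmul_inv_left_central (fun w => (Ecent hR ha hb z w).eq) z'
  rw [e2] at h
  have e3 : tensorAct (b*z') (tmul (gc (gc a b) z) z')⁻¹ =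
      (tmul (gc (gc a b) z) z')⁻¹ := by
    rw [map_inv, ← act_act, psi_act hR ha hb, psi_act hR ha hb]
  rw [e3] at h
  have e4 : tensorAct ((gc (gc a b) z)⁻¹ * z') (tmul (gc (gc a z) z') b) =
      tensorAct z' (tmul (gc (gc a z) z') b) := by
    rw [← act_act, act_E_inv hR ha hb]
  rw [e4] at h
  have h5 : tensorAct z' (tmul (gc (gc a z) z') b) = tmul (gc (gc a b) z) z' :=
    mul_inv_eq_one.mp h
  have h6 := congrArg (tensorAct z'⁻¹) h5
  rwa [act_cancel, psi_act hR ha hb] at h6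

/-- Main vanishing theorem : `[a,b,x] ⊗ y = 1` for `a, b ∈ R`. -/
theorem main_vanish (z z' : G) : tmul (gc (gc a b) z) z' = 1 := by
  have h := E2lin (Rmem hR ha) b (gc z z')
  rw [show (a⁻¹ * b⁻¹ * a * b) = gc a b from rfl,
      show (a⁻¹ * (gc z z')⁻¹ * a * (gc z z')) = gc a (gc z z') from rfl] at h
  rw [c8 (R_CE hR ha) (R_CE hR (R_gc_mem hR ha hb z)) (R_CE hR (R_gc_mem hR ha hb z'))] at h
  have e2 : tmul (gc (gc a z) z' * gc (gc a z) z') b =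
      tmul (gc (gc a b) z) z' * tmul (gc (gc a b) z) z' := by
    rw [tmul_mul_left]
    rw [show tensorAct (gc (gc a z) z') (tmul (gc (gc a z) z') b) =
        (tmul (gc a z) z')⁻¹ * tmul (gc (gc a z) z') b * tmul (gc a z) z' from
      act_commutator (gc a z) z' _]
    rw [p_tensor hR ha hb z z']
    rw [psi_central hR ha hb z z' ((tmul (gc a z) z')⁻¹)]
    group
  rw [e2, dten_comm hR ha hb z z'] at h
  simp only [← act_act, map_mul, psi_act hR ha hb] at h
  have hcube := psi_cube hR ha hb z z'
  calc tmul (gc (gc a b) z) z'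
      = tmul (gc (gc a b) z) z' *
        (tmul (gc (gc a b) z) z' * tmul (gc (gc a b) z) z' * tmul (gc (gc a b) z) z') := by
        rw [hcube, mul_one]
    _ = (tmul (gc (gc a b) z) z' * tmul (gc (gc a b) z) z') *
        (tmul (gc (gc a b) z) z' * tmul (gc (gc a b) z) z') := by group
    _ = 1 := h

end Tensor2
/-- If `x ⊗ x = 1` for all `x ∈ G`, then the derived subgroup of `R₂⊗(G)` is contained
in `Z₂⊗(G)`; in particular every commutator `[g, h]` of elements `g, h ∈ R₂⊗(G)` lies in
`Z₂⊗(G)`. Here `R` is the subgroup `R₂⊗(G)` and `Z` is the subgroup `Z₂⊗(G)`. -/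
theorem stmt_19 (G : Type*) [Group G] (hsq : ∀ x : G, tmul x x = 1)
    (R Z : Subgroup G)
    (hR : (R : Set G) = {g : G | ∀ x : G, tmul (g⁻¹ * x⁻¹ * g * x) x = 1})
    (hZ : (Z : Set G) = {a : G | ∀ g h : G, tmul (a⁻¹ * g⁻¹ * a * g) h = 1}) :
    ⁅R, R⁆ ≤ Z ∧ ∀ g ∈ R, ∀ h ∈ R, g⁻¹ * h⁻¹ * g * h ∈ Z := by
  have main : ∀ g ∈ R, ∀ h ∈ R, g⁻¹ * h⁻¹ * g * h ∈ Z := by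
    intro g hg h hh
    rw [← SetLike.mem_coe, hZ]
    intro u v
    exact main_vanish hR hg hh u v
  refine ⟨?_, main⟩
  rw [Subgroup.commutator_le]
  intro g hg h hh
  have h1 := main g⁻¹ (R.inv_mem hg) h⁻¹ (R.inv_mem hh)
  have e : g * h * g⁻¹ * h⁻¹ = (g⁻¹)⁻¹ * (h⁻¹)⁻¹ * g⁻¹ * h⁻¹ := by
    group
  rw [commutatorElement_def, e]
  exact h1
end
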